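/- Let P be a probability measure on ℝ of order 1 (i.e., ∫|x| dP(x) < ∞) and τ ∈ (0,1). Then q̄ is a τ-quantile of P if and only if q̄ minimizes q ↦ ∫_ℝ ρ_τ(x - q) dP(x) over ℝ. -/

import Mathlib

open MeasureTheory

noncomputable def rho (τ : ℝ) (x : ℝ) : ℝ := if x ≤ 0 then (τ - 1) * x else τ * x

lemma rho_eq (τ x : ℝ) : rho τ x = τ * x + max (-x) 0 := by
  unfold rho
  split_ifs with h
  · rw [max_eq_left (by linarith)]; ring
  · rw [max_eq_right (by linarith)]; ring

lemma int_rho (P : Measure ℝ) [IsProbabilityMeasure P]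
    (h1 : Integrable (fun x : ℝ => x) P) (τ q : ℝ) :
    Integrable (fun x => rho τ (x - q)) P := by
  have he : (fun x => rho τ (x - q)) = fun x => τ * (x - q) + max (q - x) 0 := by
    funext x; rw [rho_eq, neg_sub]
  rw [he]
  exact ((h1.sub (integrable_const q)).const_mul τ).add
    (((integrable_const q).sub h1).pos_part)

lemma rho_diff_lower (τ a b x : ℝ) (hab : a ≤ b) :
    (b - a) * (Set.Iic a).indicator (fun _ => (1:ℝ)) x - τ * (b - a)
      ≤ rho τ (x - b) - rho τ (x - a) := by
  rw [rho_eq, rho_eq, neg_sub, neg_sub]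
  by_cases hxa : x ∈ Set.Iic a
  · simp only [Set.indicator_of_mem hxa]
    simp only [Set.mem_Iic] at hxa
    rw [max_eq_left (by linarith), max_eq_left (by linarith)]
    ring_nf
    linarith
  · simp only [Set.indicator_of_notMem hxa]
    simp only [Set.mem_Iic, not_le] at hxa
    rw [max_eq_right (by linarith : a - x ≤ 0)]
    nlinarith [le_max_right (b - x) (0:ℝ)]

lemma rho_diff_upper (τ a b x : ℝ) (hab : a ≤ b) :
    rho τ (x - b) - rho τ (x - a)
      ≤ (b - a) * (Set.Iio b).indicator (fun _ => (1:ℝ)) x - τ * (b - a) := by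
  rw [rho_eq, rho_eq, neg_sub, neg_sub]
  by_cases hxb : x ∈ Set.Iio b
  · simp only [Set.indicator_of_mem hxb]
    simp only [Set.mem_Iio] at hxb
    rw [max_eq_left (by linarith : (0:ℝ) ≤ b - x)]
    nlinarith [le_max_left (a - x) (0:ℝ)]
  · simp only [Set.indicator_of_notMem hxb]
    simp only [Set.mem_Iio, not_lt] at hxb
    rw [max_eq_right (by linarith : b - x ≤ 0)]
    nlinarith [le_max_right (a - x) (0:ℝ)]

lemma g_diff_lower (P : Measure ℝ) [IsProbabilityMeasure P]
    (h1 : Integrable (fun x : ℝ => x) P) (τ a b : ℝ) (hab : a ≤ b) :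
    (b - a) * ((P (Set.Iic a)).toReal - τ)
      ≤ ∫ x, rho τ (x - b) ∂P - ∫ x, rho τ (x - a) ∂P := by
  rw [← integral_sub (int_rho P h1 τ b) (int_rho P h1 τ a)]
  have hint : Integrable (fun x => (b - a) * (Set.Iic a).indicator (fun _ => (1:ℝ)) x
      - τ * (b - a)) P := by
    apply Integrable.sub _ (integrable_const _)
    exact ((integrable_indicator_iff measurableSet_Iic).2
      ((integrable_const (1:ℝ)).integrableOn)).const_mul _
  have hmono := integral_mono hint ((int_rho P h1 τ b).sub (int_rho P h1 τ a))
    (fun x => rho_diff_lower τ a b x hab)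
  have hcalc : ∫ x, ((b - a) * (Set.Iic a).indicator (fun _ => (1:ℝ)) x - τ * (b - a)) ∂P
      = (b - a) * (P (Set.Iic a)).toReal - τ * (b - a) := by
    rw [integral_sub (((integrable_indicator_iff measurableSet_Iic).2
      ((integrable_const (1:ℝ)).integrableOn)).const_mul _) (integrable_const _),
      integral_const_mul, integral_indicator_const _ measurableSet_Iic, integral_const]
    simp [Measure.real]
  rw [hcalc] at hmono
  simp only [Pi.sub_apply] at hmono
  nlinarith [hmono]

lemma g_diff_upper (P : Measure ℝ) [IsProbabilityMeasure P]
    (h1 : Integrable (fun x : ℝ => x) P) (τ a b : ℝ) (hab : a ≤ b) :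
    ∫ x, rho τ (x - b) ∂P - ∫ x, rho τ (x - a) ∂P
      ≤ (b - a) * ((P (Set.Iio b)).toReal - τ) := by
  rw [← integral_sub (int_rho P h1 τ b) (int_rho P h1 τ a)]
  have hint : Integrable (fun x => (b - a) * (Set.Iio b).indicator (fun _ => (1:ℝ)) x
      - τ * (b - a)) P := by
    apply Integrable.sub _ (integrable_const _)
    exact ((integrable_indicator_iff measurableSet_Iio).2
      ((integrable_const (1:ℝ)).integrableOn)).const_mul _
  have hmono := integral_mono ((int_rho P h1 τ b).sub (int_rho P h1 τ a)) hint
    (fun x => rho_diff_upper τ a b x hab)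
  have hcalc : ∫ x, ((b - a) * (Set.Iio b).indicator (fun _ => (1:ℝ)) x - τ * (b - a)) ∂P
      = (b - a) * (P (Set.Iio b)).toReal - τ * (b - a) := by
    rw [integral_sub (((integrable_indicator_iff measurableSet_Iio).2
      ((integrable_const (1:ℝ)).integrableOn)).const_mul _) (integrable_const _),
      integral_const_mul, integral_indicator_const _ measurableSet_Iio, integral_const]
    simp [Measure.real]
  rw [hcalc] at hmono
  simp only [Pi.sub_apply] at hmono
  nlinarith [hmono]

lemma exists_lt_of_lt_Iio (P : Measure ℝ) [IsProbabilityMeasure P] (q τ : ℝ) (hτ0 : 0 ≤ τ)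
    (h : τ < (P (Set.Iio q)).toReal) : ∃ a < q, τ < (P (Set.Iic a)).toReal := by
  have hunion : Set.Iio q = ⋃ n : ℕ, Set.Iic (q - 1 / (n + 1)) := by
    ext x
    simp only [Set.mem_Iio, Set.mem_iUnion, Set.mem_Iic]
    constructor
    · intro hx
      obtain ⟨n, hn⟩ := exists_nat_one_div_lt (by linarith : (0:ℝ) < q - x)
      exact ⟨n, by push_cast at hn ⊢; linarith⟩
    · rintro ⟨n, hn⟩
      have : (0:ℝ) < 1 / (n + 1) := by positivity
      linarith
  have hmono : Monotone (fun n : ℕ => Set.Iic (q - 1 / (n + 1))) := by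
    intro m n hmn
    apply Set.Iic_subset_Iic.2
    have hc : (m:ℝ) ≤ n := Nat.cast_le.mpr hmn
    have : (1:ℝ) / (n + 1) ≤ 1 / (m + 1) := by
      apply one_div_le_one_div_of_le (by positivity)
      linarith
    linarith
  have hsup : P (Set.Iio q) = ⨆ n : ℕ, P (Set.Iic (q - 1 / (n + 1))) := by
    rw [hunion]
    exact hmono.directed_le.measure_iUnion
  have h' : ENNReal.ofReal τ < P (Set.Iio q) :=
    (ENNReal.ofReal_lt_iff_lt_toReal hτ0 (measure_ne_top P _)).2 h
  rw [hsup, lt_iSup_iff] at h'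
  obtain ⟨n, hn⟩ := h'
  have h0 : (0:ℝ) < 1 / (n + 1) := by positivity
  refine ⟨q - 1 / (n + 1), by linarith, ?_⟩
  exact (ENNReal.ofReal_lt_iff_lt_toReal hτ0 (measure_ne_top P _)).1 hn

lemma exists_gt_of_Iic_lt (P : Measure ℝ) [IsProbabilityMeasure P] (q τ : ℝ)
    (h : (P (Set.Iic q)).toReal < τ) : ∃ b > q, (P (Set.Iio b)).toReal < τ := by
  have hinter : Set.Iic q = ⋂ n : ℕ, Set.Iio (q + 1 / (n + 1)) := by
    ext x
    simp only [Set.mem_Iic, Set.mem_iInter, Set.mem_Iio]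
    constructor
    · intro hx n
      have : (0:ℝ) < 1 / (n + 1) := by positivity
      linarith
    · intro hx
      by_contra hlt
      push_neg at hlt
      obtain ⟨n, hn⟩ := exists_nat_one_div_lt (by linarith : (0:ℝ) < x - q)
      have := hx n
      push_cast at hn this
      linarith
  have hanti : Antitone (fun n : ℕ => Set.Iio (q + 1 / (n + 1))) := by
    intro m n hmn
    apply Set.Iio_subset_Iio
    have hc : (m:ℝ) ≤ n := Nat.cast_le.mpr hmn
    have : (1:ℝ) / (n + 1) ≤ 1 / (m + 1) := by
      apply one_div_le_one_div_of_le (by positivity)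
      linarith
    linarith
  have hinf : P (Set.Iic q) = ⨅ n : ℕ, P (Set.Iio (q + 1 / (n + 1))) := by
    rw [hinter]
    exact Directed.measure_iInter (fun n => measurableSet_Iio.nullMeasurableSet)
      hanti.directed_ge ⟨0, measure_ne_top P _⟩
  have h' : P (Set.Iic q) < ENNReal.ofReal τ := by
    rw [← ENNReal.ofReal_toReal (measure_ne_top P (Set.Iic q))]
    exact_mod_cast ENNReal.ofReal_lt_ofReal_iff_of_nonneg ENNReal.toReal_nonneg |>.2 h
  rw [hinf, iInf_lt_iff] at h'
  obtain ⟨n, hn⟩ := h'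
  have h0 : (0:ℝ) < 1 / (n + 1) := by positivity
  refine ⟨q + 1 / (n + 1), by linarith, ?_⟩
  have := ENNReal.toReal_lt_of_lt_ofReal hn
  exact this

theorem stmt15 (P : Measure ℝ) [IsProbabilityMeasure P]
    (h1 : Integrable (fun x : ℝ => x) P)
    (τ : ℝ) (hτ : τ ∈ Set.Ioo (0:ℝ) 1) (qbar : ℝ) :
    ((P (Set.Iio qbar)).toReal ≤ τ ∧ τ ≤ (P (Set.Iic qbar)).toReal) ↔
      (∀ q : ℝ, ∫ x, rho τ (x - qbar) ∂P ≤ ∫ x, rho τ (x - q) ∂P) := by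
  constructor
  · rintro ⟨hlo, hhi⟩ q
    rcases le_total qbar q with hq | hq
    · have := g_diff_lower P h1 τ qbar q hq
      nlinarith [this]
    · have := g_diff_upper P h1 τ q qbar hq
      nlinarith [this]
  · intro hmin
    constructor
    · by_contra hcon
      push_neg at hcon
      obtain ⟨a, ha, hP⟩ := exists_lt_of_lt_Iio P qbar τ (le_of_lt hτ.1) hcon
      have := g_diff_lower P h1 τ a qbar (le_of_lt ha)
      have hm := hmin a
      nlinarith [this, hm]
    · by_contra hcon
      push_neg at hcon
      obtain ⟨b, hb, hP⟩ := exists_gt_of_Iic_lt P qbar τ hcon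
      have := g_diff_upper P h1 τ qbar b (le_of_lt hb)
      have hm := hmin b
      nlinarith [this, hm]
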